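/- Under the assumptions of the previous lemma, if additionally x_{t+1} = x_t − η_t(∇f(x̂_t) + Aᵀ ŷ_t) (so that ⟨x − x_{t+1}, x_{t+1} − x_t + η_t(∇f(x̂_t)+Aᵀŷ_t)⟩ ≥ 0 for all x), then {f(x̄_{t+1}) − f(x) − (1−θ_t)[f(x̄_t) − f(x)]}/θ_t ≤ ⟨x − x_{t+1}, x_{t+1} − x_t⟩/η_t + (L_f θ_t/2)‖x_{t+1} − x_t‖² − (μ_f θ_t/2)‖x − x_t‖² + ⟨Ax − Ax_{t+1}, ŷ_t⟩. -/

import Mathlib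

open scoped RealInnerProductSpace

lemma aux_norm {E : Type*} [NormedAddCommGroup E] [InnerProductSpace ℝ E]
    (θ : ℝ) (hθ0 : 0 < θ) (hθ1 : θ ≤ 1) (a b : E) :
    θ^2 * ‖a + (1-θ) • b‖^2 ≤ θ * ‖a‖^2 + θ^2 * (1-θ) * ‖b‖^2 := by
  have k1 : ‖a + (1-θ) • b‖^2 = ‖a‖^2 + 2*(1-θ)*⟪a,b⟫ + (1-θ)^2*‖b‖^2 := by
    rw [← real_inner_self_eq_norm_sq, ← real_inner_self_eq_norm_sq, ← real_inner_self_eq_norm_sq]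
    simp only [inner_add_add_self, real_inner_smul_left, real_inner_smul_right]
    rw [real_inner_comm a b]
    ring
  have k2 : ‖a - θ • b‖^2 = ‖a‖^2 - 2*θ*⟪a,b⟫ + θ^2*‖b‖^2 := by
    rw [← real_inner_self_eq_norm_sq, ← real_inner_self_eq_norm_sq, ← real_inner_self_eq_norm_sq]
    simp only [inner_sub_sub_self, real_inner_smul_left, real_inner_smul_right]
    rw [real_inner_comm a b]
    ring
  have h0 : 0 ≤ θ * (1-θ) * ‖a - θ • b‖^2 :=
    mul_nonneg (mul_nonneg hθ0.le (by linarith)) (sq_nonneg _)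
  nlinarith [h0, k1, k2]

theorem stmt4 {E F : Type*} [NormedAddCommGroup E] [InnerProductSpace ℝ E] [CompleteSpace E]
    [NormedAddCommGroup F] [InnerProductSpace ℝ F] [CompleteSpace F]
    (f : E → ℝ) (f' : E → E) (A : E →L[ℝ] F) (Lf μf : ℝ) (hμf : 0 ≤ μf)
    (hsmooth : ∀ u v, f u ≤ f v + ⟪f' v, u - v⟫ + Lf / 2 * ‖u - v‖ ^ 2)
    (hsc : ∀ z w, f w + ⟪f' w, z - w⟫ + μf / 2 * ‖z - w‖ ^ 2 ≤ f z)
    (θ η : ℝ) (hθ0 : 0 < θ) (hθ1 : θ ≤ 1) (hη : 0 < η)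
    (xb x0 x1 xh xb' : E) (yh : F)
    (hxh : xh = (1 - θ) • xb + θ • x0)
    (hxb' : xb' = (1 - θ) • xb + θ • x1)
    (hupd : x1 = x0 - η • (f' xh + (ContinuousLinearMap.adjoint A) yh)) :
    ∀ x, (f xb' - f x - (1 - θ) * (f xb - f x)) / θ ≤
      ⟪x - x1, x1 - x0⟫ / η + Lf * θ / 2 * ‖x1 - x0‖ ^ 2
      - μf * θ / 2 * ‖x - x0‖ ^ 2 + ⟪A x - A x1, yh⟫ := by
  intro x
  have e1 : xb' - xh = θ • (x1 - x0) := by rw [hxb', hxh]; module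
  have e2 : xb - xh = θ • (xb - x0) := by rw [hxh]; module
  have e3 : x - xh = (x - x0) - (1-θ) • (xb - x0) := by rw [hxh]; module
  have e4 : x - x0 = (x - xh) + (1-θ) • (xb - x0) := by rw [hxh]; module
  have n1 : ‖θ • (x1 - x0)‖^2 = θ^2 * ‖x1 - x0‖^2 := by
    rw [norm_smul, Real.norm_eq_abs, mul_pow, sq_abs]
  have n2 : ‖θ • (xb - x0)‖^2 = θ^2 * ‖xb - x0‖^2 := by
    rw [norm_smul, Real.norm_eq_abs, mul_pow, sq_abs]
  have h1 := hsmooth xb' xh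
  have h2 := hsc xb xh
  have h3 := hsc x xh
  rw [e1, n1] at h1
  rw [e2, n2] at h2
  rw [e3] at h3
  simp only [inner_sub_right, real_inner_smul_right] at h1 h2 h3
  -- gradient step
  have hb : x1 - x0 = -(η • (f' xh + (ContinuousLinearMap.adjoint A) yh)) := by
    rw [hupd]; module
  have hinner : ⟪x - x1, x1 - x0⟫ = -η * ((⟪f' xh, x⟫ - ⟪f' xh, x1⟫) + ⟪A x - A x1, yh⟫) := by
    rw [hb, inner_neg_right, real_inner_smul_right, inner_add_right,
      ContinuousLinearMap.adjoint_inner_right, ← map_sub, real_inner_comm, inner_sub_right]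
    ring
  have hdiv : ⟪x - x1, x1 - x0⟫ / η = -(⟪f' xh, x⟫ - ⟪f' xh, x1⟫) - ⟪A x - A x1, yh⟫ := by
    rw [hinner]; field_simp; ring
  rw [← e3] at h3
  -- norm inequality
  have h4 : θ^2 * ‖x - x0‖^2 ≤ θ * ‖x - xh‖^2 + θ^2 * (1-θ) * ‖xb - x0‖^2 := by
    rw [e4]; exact aux_norm θ hθ0 hθ1 _ _
  have h2' := mul_le_mul_of_nonneg_left h2 (by linarith : (0:ℝ) ≤ 1 - θ)
  have h3' := mul_le_mul_of_nonneg_left h3 hθ0.le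
  have h4' := mul_le_mul_of_nonneg_left h4 (by linarith : (0:ℝ) ≤ μf / 2)
  rw [div_le_iff₀ hθ0, hdiv]
  nlinarith [h1, h2', h3', h4']
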